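/- With X a nontrivial minimal subshift of Σ₂ and X̃ ⊆ Σ₃ its extension as above, the only periodic point of (X̃, σ) is the fixed point 2^∞ = 222⋯. In particular, the periodic points of (X̃, σ) are not dense in X̃, and X̃ is not minimal. -/

import Mathlib

open TopologicalSpace

/-- The induced map on the hyperspace of nonempty compact subsets. -/
def barMap {X : Type*} [TopologicalSpace X] (f : X → X) (hf : Continuous f) :
    NonemptyCompacts X → NonemptyCompacts X :=
  fun A => ⟨⟨f '' A, A.isCompact.image hf⟩, A.nonempty.image f⟩

/-- Topological transitivity. -/
def IsTransitive {X : Type*} [TopologicalSpace X] (f : X → X) : Prop :=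
  ∀ U V : Set X, IsOpen U → IsOpen V → U.Nonempty → V.Nonempty →
    ∃ n : ℕ, (f^[n] '' U ∩ V).Nonempty

/-- Topological mixing. -/
def IsMixing {X : Type*} [TopologicalSpace X] (f : X → X) : Prop :=
  ∀ U V : Set X, IsOpen U → IsOpen V → U.Nonempty → V.Nonempty →
    ∃ N : ℕ, ∀ n ≥ N, (f^[n] '' U ∩ V).Nonempty

/-- Weak mixing: `f × f` is transitive. -/
def IsWeaklyMixing {X : Type*} [TopologicalSpace X] (f : X → X) : Prop :=
  IsTransitive (fun p : X × X => (f p.1, f p.2))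

/-- The set of periodic points. -/
def Periodics {X : Type*} (f : X → X) : Set X := {x | ∃ n ≥ 1, f^[n] x = x}

/-- The shift map on the full shift over k symbols. -/
def shiftMap {k : ℕ} : (ℕ → Fin k) → (ℕ → Fin k) := fun x n => x (n + 1)

/-- A finite word is admissible in Y if it occurs in some element of Y. -/
def AdmissibleIn {k : ℕ} (Y : Set (ℕ → Fin k)) (u : List (Fin k)) : Prop :=
  ∃ y ∈ Y, ∃ i : ℕ, ∀ l : ℕ, ∀ h : l < u.length, y (i + l) = u.get ⟨l, h⟩

/-- A nonempty closed invariant set with no proper nonempty closed invariant subset. -/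
def IsMinimalSet {X : Type*} [TopologicalSpace X] (f : X → X) (A : Set X) : Prop :=
  A.Nonempty ∧ IsClosed A ∧ Set.MapsTo f A A ∧
    ∀ B ⊆ A, B.Nonempty → IsClosed B → Set.MapsTo f B B → B = A

/-- Topological mixing of the subsystem on an invariant subset Y, phrased with
relatively open sets. -/
def SubMixing {X : Type*} [TopologicalSpace X] (f : X → X) (Y : Set X) : Prop :=
  ∀ U V : Set X, IsOpen U → IsOpen V → (U ∩ Y).Nonempty → (V ∩ Y).Nonempty →
    ∃ N : ℕ, ∀ n ≥ N, ∃ y ∈ U ∩ Y, f^[n] y ∈ V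

/-- The embedding of the 2-symbol alphabet into the 3-symbol alphabet. -/
def emb23 : Fin 2 → Fin 3 := fun b => ⟨b.val, by omega⟩

/-- The extension of b in Σ₃: sequences obtained from b by inserting the symbol 2
at the remaining positions, keeping the symbols of b in order along an infinite
increasing sequence of positions. -/
def Xb (b : ℕ → Fin 2) : Set (ℕ → Fin 3) :=
  {x | ∃ n : ℕ → ℕ, StrictMono n ∧ (∀ i, x (n i) = emb23 (b i)) ∧
        ∀ m, (∀ i, n i ≠ m) → x m = (2 : Fin 3)}

/-- The extension of the subshift X ⊆ Σ₂ inside Σ₃. -/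
def Xtilde (X : Set (ℕ → Fin 2)) : Set (ℕ → Fin 3) :=
  closure (⋃ b ∈ X, Xb b)


lemma shift_iter {k : ℕ} (x : ℕ → Fin k) (j m : ℕ) : shiftMap^[j] x m = x (m + j) := by
  induction j generalizing x with
  | zero => rfl
  | succ j ih => rw [Function.iterate_succ_apply, ih]; simp only [shiftMap]; ring_nf

lemma mem_closure_of_prefix {k : ℕ} {S : Set (ℕ → Fin k)} {x : ℕ → Fin k}
    (h : ∀ N : ℕ, ∃ y ∈ S, ∀ i < N, y i = x i) : x ∈ closure S := by
  choose y hyS hy using h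
  refine mem_closure_of_tendsto (f := y) (b := Filter.atTop) ?_ (Filter.Eventually.of_forall hyS)
  rw [tendsto_pi_nhds]
  intro i
  refine Filter.Tendsto.congr' ?_ (tendsto_const_nhds (x := x i))
  filter_upwards [Filter.eventually_ge_atTop (i + 1)] with N hN
  exact (hy N i (by omega)).symm

lemma prefix_of_mem_closure {k : ℕ} {S : Set (ℕ → Fin k)} {x : ℕ → Fin k}
    (h : x ∈ closure S) (N : ℕ) : ∃ y ∈ S, ∀ i < N, y i = x i := by
  have hU : IsOpen {y : ℕ → Fin k | ∀ i < N, y i = x i} := by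
    have he : {y : ℕ → Fin k | ∀ i < N, y i = x i}
        = ⋂ i ∈ Finset.range N, (fun y : ℕ → Fin k => y i) ⁻¹' {x i} := by
      ext y; simp [Finset.mem_range]
    rw [he]
    exact isOpen_biInter_finset fun i _ =>
      (continuous_apply i).isOpen_preimage _ (isOpen_discrete _)
  obtain ⟨y, hyU, hyS⟩ := mem_closure_iff.mp h _ hU (fun i _ => rfl)
  exact ⟨y, hyS, hyU⟩

lemma emb23_ne_two (b : Fin 2) : emb23 b ≠ 2 := by fin_cases b <;> decide

lemma emb23_inj : Function.Injective emb23 := by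
  intro a b h
  exact Fin.ext (by simpa [emb23] using congrArg Fin.val h)

lemma count_congr {p q : ℕ → Prop} [DecidablePred p] [DecidablePred q] {k : ℕ}
    (h : ∀ j < k, (p j ↔ q j)) : Nat.count p k = Nat.count q k := by
  induction k with
  | zero => simp
  | succ k ih =>
    rw [Nat.count_succ, Nat.count_succ, ih (fun j hj => h j (by omega))]
    simp [h k (by omega)]

lemma key (X : Set (ℕ → Fin 2)) (hXc : IsClosed X) (hXi : Set.MapsTo shiftMap X X)
    (hXinf : X.Infinite) (hXmin : IsMinimalSet shiftMap X) :
    ∀ x ∈ Xtilde X, (∃ n : ℕ, 1 ≤ n ∧ shiftMap^[n] x = x) → x = fun _ => (2 : Fin 3) := by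
  intro x hx ⟨n, hn, hper⟩
  by_contra hne
  have hm0 : ∃ m, x m ≠ 2 := by
    by_contra h; push_neg at h; exact hne (funext h)
  obtain ⟨m₀, hm₀⟩ := hm0
  -- periodicity of x
  have hxper : ∀ m, x (m + n) = x m := by
    intro m
    conv_rhs => rw [← hper]
    rw [shift_iter]
  have hxmul : ∀ j m, x (m + n * j) = x m := by
    intro j
    induction j with
    | zero => simp
    | succ j ih =>
      intro m
      have : m + n * (j + 1) = (m + n * j) + n := by ring
      rw [this, hxper, ih]
  have hxmod : ∀ m, x m = x (m % n) := by
    intro m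
    conv_lhs => rw [← Nat.mod_add_div m n]
    exact hxmul _ _
  set p : ℕ → Prop := fun m => x m ≠ 2 with hpdef
  haveI : DecidablePred p := fun m => instDecidableNot
  have hp_per : ∀ m, p (m + n) ↔ p m := fun m => by simp only [p, hxper]
  have hp_inf : (setOf p).Infinite := by
    intro hfin
    obtain ⟨K, hK⟩ := hfin.bddAbove
    have hmem : (m₀ % n + n * (K + 1)) ∈ setOf p := by
      show x _ ≠ 2
      rw [hxmul, ← hxmod]
      exact hm₀
    have h1 := hK hmem
    have h2 : K + 1 ≤ n * (K + 1) := Nat.le_mul_of_pos_left _ (by omega)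
    omega
  set f : ℕ → ℕ := Nat.nth p with hfdef
  have hfp : ∀ i, p (f i) := Nat.nth_mem_of_infinite hp_inf
  have hfmono : StrictMono f := Nat.nth_strictMono hp_inf
  have hcount_f : ∀ i, Nat.count p (f i) = i := Nat.count_nth_of_infinite hp_inf
  set r : ℕ := Nat.count p n with hrdef
  have hr1 : 1 ≤ r := by
    have hpm : p (m₀ % n) := by show x _ ≠ 2; rw [← hxmod]; exact hm₀
    have hlt : m₀ % n < n := Nat.mod_lt _ (by omega)
    have h1 : Nat.count p (m₀ % n + 1) = Nat.count p (m₀ % n) + 1 := by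
      rw [Nat.count_succ, if_pos hpm]
    have h2 := Nat.count_monotone p (show m₀ % n + 1 ≤ n by omega)
    omega
  have hcount : ∀ m, Nat.count p (m + n) = Nat.count p m + r := by
    intro m
    induction m with
    | zero => simp [hrdef]
    | succ m ih =>
      have e1 : m + 1 + n = (m + n) + 1 := by omega
      rw [e1, Nat.count_succ, Nat.count_succ, ih]
      by_cases hpm : p m
      · rw [if_pos hpm, if_pos ((hp_per m).mpr hpm)]; omega
      · rw [if_neg hpm, if_neg (fun h => hpm ((hp_per m).mp h))]; omega
  have hfper : ∀ i, f (i + r) = f i + n := by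
    intro i
    have h1 : p (f i + n) := (hp_per _).mpr (hfp i)
    have h2 : Nat.count p (f i + n) = i + r := by rw [hcount, hcount_f]
    have := Nat.nth_count h1
    rw [h2] at this
    exact this
  set c : ℕ → Fin 2 := fun i => if x (f i) = 0 then 0 else 1 with hcdef
  have hc : ∀ i, emb23 (c i) = x (f i) := by
    intro i
    have hv := hfp i
    simp only [hpdef] at hv
    simp only [hcdef]
    revert hv
    generalize x (f i) = v
    intro hv
    fin_cases v <;> simp_all <;> decide
  have hcper : ∀ i, c (i + r) = c i := by
    intro i
    simp only [hcdef, hfper i, hxper]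
  -- c ∈ X
  have hcX : c ∈ X := by
    rw [← hXc.closure_eq]
    apply mem_closure_of_prefix
    intro L
    obtain ⟨y, hyU, hyx⟩ := prefix_of_mem_closure hx (f L + 1)
    simp only [Set.mem_iUnion] at hyU
    obtain ⟨b, hbX, m, hm_mono, hm_val, hm_off⟩ := hyU
    set q : ℕ → Prop := fun j => y j ≠ 2 with hqdef
    haveI : DecidablePred q := fun m => instDecidableNot
    have hrange : Set.range m = setOf q := by
      ext j
      constructor
      · rintro ⟨i, rfl⟩
        show y (m i) ≠ 2
        rw [hm_val]; exact emb23_ne_two _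
      · intro hj
        by_contra hc'
        exact hj (hm_off j (fun i hi => hc' ⟨i, hi⟩))
    have hq_inf : (setOf q).Infinite := hrange ▸ Set.infinite_range_of_injective hm_mono.injective
    have hm_nth : Nat.nth q = m := by
      rw [← (Nat.nth_strictMono hq_inf).range_inj hm_mono,
        Nat.range_nth_of_infinite hq_inf, hrange]
      rfl
    refine ⟨b, hbX, ?_⟩
    intro i hiL
    have hfi_lt : f i < f L + 1 := by
      have := hfmono.monotone (Nat.le_of_lt hiL)
      omega
    have hagree : ∀ j < f L + 1, (q j ↔ p j) := by
      intro j hj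
      simp only [hqdef, hpdef, hyx j hj]
    have hqfi : q (f i) := (hagree _ hfi_lt).mpr (hfp i)
    have hcnt : Nat.count q (f i) = i := by
      rw [count_congr (fun j hj => hagree j (by omega)), hcount_f]
    have hmi : m i = f i := by
      rw [← hm_nth]
      have := Nat.nth_count hqfi
      rw [hcnt] at this
      exact this
    apply emb23_inj
    rw [hc i, ← hyx (f i) hfi_lt, ← hmi, hm_val]
  -- c periodic in X ⇒ X finite ⇒ contradiction
  have hciter : ∀ j, shiftMap^[j] c ∈ X := by
    intro j
    induction j with
    | zero => exact hcX
    | succ j ih => rw [Function.iterate_succ_apply']; exact hXi ih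
  have hcr : shiftMap^[r] c = c := funext fun i => by rw [shift_iter]; exact hcper i
  have hmodit : ∀ j, shiftMap^[j] c = shiftMap^[j % r] c := by
    have haux : ∀ t s, shiftMap^[s + r * t] c = shiftMap^[s] c := by
      intro t
      induction t with
      | zero => simp
      | succ t ih =>
        intro s
        have e : s + r * (t + 1) = (s + r * t) + r := by ring
        rw [e, Function.iterate_add_apply, hcr, ih]
    intro j
    conv_lhs => rw [← Nat.mod_add_div j r]
    exact haux _ _
  set B : Set (ℕ → Fin 2) := Set.range (fun j : ℕ => shiftMap^[j] c) with hBdef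
  have hBfin : B.Finite := by
    apply Set.Finite.subset ((Set.finite_Iio r).image (fun j : ℕ => shiftMap^[j] c))
    rintro _ ⟨j, rfl⟩
    exact ⟨j % r, Nat.mod_lt _ (by omega), (hmodit j).symm⟩
  have hBX : B ⊆ X := by rintro _ ⟨j, rfl⟩; exact hciter j
  have hBmaps : Set.MapsTo shiftMap B B := by
    rintro _ ⟨j, rfl⟩
    refine ⟨j + 1, ?_⟩
    show shiftMap^[j + 1] c = shiftMap (shiftMap^[j] c)
    exact Function.iterate_succ_apply' _ _ _
  have hBeq := hXmin.2.2.2 B hBX ⟨c, 0, rfl⟩ hBfin.isClosed hBmaps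
  exact hXinf (hBeq ▸ hBfin)

/-- The only periodic point of the extension of a nontrivial minimal subshift is
the fixed point 2^infty; hence periodic points are not dense and the extension is
not minimal. -/
theorem Xtilde_unique_periodic (X : Set (ℕ → Fin 2))
    (hXc : IsClosed X) (hXi : Set.MapsTo shiftMap X X)
    (hXinf : X.Infinite) (hXmin : IsMinimalSet shiftMap X) :
    (∀ x ∈ Xtilde X, (∃ n : ℕ, 1 ≤ n ∧ shiftMap^[n] x = x) →
        x = fun _ => (2 : Fin 3)) ∧
    ¬ (Xtilde X ⊆ closure {x ∈ Xtilde X | ∃ n : ℕ, 1 ≤ n ∧ shiftMap^[n] x = x}) ∧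
    ¬ IsMinimalSet shiftMap (Xtilde X) := by
  have hkey := key X hXc hXi hXinf hXmin
  obtain ⟨b₀, hb₀⟩ := hXmin.1
  -- the point emb23 ∘ b₀ is in Xtilde X and differs from 2^∞
  have hx0Xb : (fun i => emb23 (b₀ i)) ∈ Xb b₀ := by
    refine ⟨id, strictMono_id, fun i => rfl, fun m hm => absurd rfl (hm m)⟩
  have hx0mem : (fun i => emb23 (b₀ i)) ∈ Xtilde X := by
    apply subset_closure
    exact Set.mem_biUnion hb₀ hx0Xb
  have hx0ne : (fun i => emb23 (b₀ i)) ≠ fun _ => (2 : Fin 3) := by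
    intro h
    exact emb23_ne_two (b₀ 0) (congrFun h 0)
  -- 2^∞ ∈ Xtilde X
  have h2mem : (fun _ => (2 : Fin 3)) ∈ Xtilde X := by
    apply mem_closure_of_prefix
    intro N
    refine ⟨fun m => if m < N then 2 else emb23 (b₀ (m - N)), ?_, ?_⟩
    · apply Set.mem_biUnion hb₀
      refine ⟨fun i => N + i, fun a b hab => show N + a < N + b by omega, fun i => ?_, fun m hm => ?_⟩
      · simp only [add_tsub_cancel_left, if_neg (by omega : ¬ N + i < N)]
      · have hmN : m < N := by
          by_contra h
          exact hm (m - N) (show N + (m - N) = m by omega)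
        simp [hmN]
    · intro i hi; simp [hi]
  refine ⟨hkey, ?_, ?_⟩
  · intro hsub
    have h1 : {x ∈ Xtilde X | ∃ n : ℕ, 1 ≤ n ∧ shiftMap^[n] x = x}
        ⊆ {(fun _ => (2 : Fin 3))} := by
      rintro z ⟨hz1, hz2⟩
      exact hkey z hz1 hz2
    have h2 : closure {x ∈ Xtilde X | ∃ n : ℕ, 1 ≤ n ∧ shiftMap^[n] x = x}
        ⊆ {(fun _ => (2 : Fin 3))} := closure_minimal h1 isClosed_singleton
    exact hx0ne (h2 (hsub hx0mem))
  · intro hmin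
    have hmap : Set.MapsTo shiftMap {(fun _ => (2 : Fin 3))} {(fun _ => (2 : Fin 3))} := by
      intro z hz
      simp only [Set.mem_singleton_iff] at hz ⊢
      subst hz
      rfl
    have heq := hmin.2.2.2 {(fun _ => (2 : Fin 3))}
      (Set.singleton_subset_iff.mpr h2mem) (Set.singleton_nonempty _)
      isClosed_singleton hmap
    rw [← heq] at hx0mem
    exact hx0ne hx0mem
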